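/- Let Θ be a nonempty set, {P_θ : θ ∈ Θ} a family of probability measures on a measurable space 𝒴, and {S_θ : θ ∈ Θ} an e-collection for it, i.e. each S_θ : 𝒴 → [0,∞) is measurable with ∫ S_θ dP_θ ≤ 1. Let 𝒜 be a set, let L : Θ × 𝒜 → ℝ satisfy the no-sure-gain condition sup_{θ∈Θ} L(θ,a) ≥ 0 for every a ∈ 𝒜, and let δ : 𝒴 → 𝒜 be a decision rule. Define the e-posterior P̄(θ|y) := 1/S_θ(y) (with 1/0 := ∞) and the e-posterior risk bound R̄(y) := sup_{θ∈Θ} P̄(θ|y)·L(θ,δ(y)), with conventions ∞·0 := 0 and ∞·c := ∞ for c > 0. Assume y ↦ L(θ,δ(y))/R̄(y) is measurable for each θ, with the conventions c/∞ := 0 and c/0 := 0 for c ≤ 0 (whenever R̄(y) = 0 one automatically has L(θ,δ(y)) ≤ 0). Then for every θ ∈ Θ: E_{Y∼P_θ}[ L(θ,δ(Y)) / R̄(Y) ] ≤ 1. -/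

import Mathlib

open MeasureTheory ENNReal

/-- Proposition 1, first claim (TheBoundA): validity of e-posterior risk assessments.
Given an e-collection `S` for a model `P`, a loss `L` satisfying the no-sure-gain
condition, and a decision rule `δ`, the e-posterior risk bound `R̄` satisfies
`E_{P θ}[ L(θ, δ Y) / R̄ Y ] ≤ 1` for every `θ`. -/
theorem e_posterior_risk_bound_valid
    {Θ 𝒴 𝒜 : Type*} [Nonempty Θ] [MeasurableSpace 𝒴]
    (P : Θ → Measure 𝒴) [∀ θ, IsProbabilityMeasure (P θ)]
    -- the e-collection
    (S : Θ → 𝒴 → ℝ)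
    (hS_nonneg : ∀ θ y, 0 ≤ S θ y)
    (hS_meas : ∀ θ, Measurable (S θ))
    (hS_e : ∀ θ, ∫⁻ y, ENNReal.ofReal (S θ y) ∂(P θ) ≤ 1)
    -- the loss function, satisfying the no-sure-gain condition
    (L : Θ × 𝒜 → ℝ)
    (hL_nsg : ∀ a : 𝒜, (0 : EReal) ≤ ⨆ θ : Θ, (L (θ, a) : EReal))
    -- the decision rule
    (δ : 𝒴 → 𝒜)
    -- the e-posterior `P̄(θ ∣ y) = 1 / S θ y`  (with `1/0 = ∞`)
    (Pbar : Θ → 𝒴 → ℝ≥0∞)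
    (hPbar : ∀ θ y, Pbar θ y = (ENNReal.ofReal (S θ y))⁻¹)
    -- the e-posterior risk bound `R̄ y = ⨆ θ, P̄(θ ∣ y) * L(θ, δ y)`
    -- (with conventions `∞ * 0 = 0`, `∞ * c = ∞` for `c > 0`; negative losses do not
    -- contribute to the supremum)
    (Rbar : 𝒴 → ℝ≥0∞)
    (hRbar : ∀ y, Rbar y = ⨆ θ : Θ, Pbar θ y * ENNReal.ofReal (L (θ, δ y)))
    -- the integrand `L(θ, δ y) / R̄ y`, with conventions `c / ∞ = 0` and `c / 0 = 0`
    -- (whenever `R̄ y = 0` one automatically has `L (θ, δ y) ≤ 0`)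
    (g : Θ → 𝒴 → ℝ)
    (hg : ∀ θ y, g θ y =
      if Rbar y = 0 ∨ Rbar y = ⊤ then 0 else L (θ, δ y) / (Rbar y).toReal)
    (hg_meas : ∀ θ, Measurable (g θ)) :
    ∀ θ : Θ, ∫ y, g θ y ∂(P θ) ≤ 1 := by
  intro θ
  -- pointwise bound: ofReal (g θ y) ≤ ofReal (S θ y)
  have key : ∀ y, ENNReal.ofReal (g θ y) ≤ ENNReal.ofReal (S θ y) := by
    intro y
    rw [hg θ y]
    split_ifs with h
    · simp [hS_nonneg θ y]
    · push_neg at h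
      obtain ⟨h0, htop⟩ := h
      set Ly := L (θ, δ y) with hLy_def
      by_cases hLy : Ly ≤ 0
      · have : Ly / (Rbar y).toReal ≤ 0 :=
          div_nonpos_iff.2 (Or.inr ⟨hLy, ENNReal.toReal_nonneg⟩)
        calc ENNReal.ofReal (Ly / (Rbar y).toReal) = 0 := ENNReal.ofReal_eq_zero.2 this
          _ ≤ _ := zero_le
      · push_neg at hLy
        have hR_ge : Pbar θ y * ENNReal.ofReal Ly ≤ Rbar y := by
          rw [hRbar y]; exact le_iSup (fun θ' => Pbar θ' y * ENNReal.ofReal (L (θ', δ y))) θ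
        have hSpos : 0 < S θ y := by
          by_contra hS0
          push_neg at hS0
          have hS0' : ENNReal.ofReal (S θ y) = 0 := ENNReal.ofReal_eq_zero.2 hS0
          have hPtop : Pbar θ y = ⊤ := by rw [hPbar, hS0']; simp
          have hmul : Pbar θ y * ENNReal.ofReal Ly = ⊤ := by
            rw [hPtop]
            exact ENNReal.top_mul (ENNReal.ofReal_pos.2 hLy).ne'
          exact htop (top_le_iff.mp (hmul ▸ hR_ge))
        have hdiv : ENNReal.ofReal (Ly / S θ y) ≤ Rbar y := by
          rw [ENNReal.ofReal_div_of_pos hSpos]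
          calc ENNReal.ofReal Ly / ENNReal.ofReal (S θ y)
              = Pbar θ y * ENNReal.ofReal Ly := by
                rw [hPbar, div_eq_mul_inv, mul_comm]
            _ ≤ Rbar y := hR_ge
        have hdiv' : Ly / S θ y ≤ (Rbar y).toReal :=
          (ENNReal.ofReal_le_iff_le_toReal htop).1 hdiv
        have hRpos : 0 < (Rbar y).toReal := ENNReal.toReal_pos h0 htop
        have : Ly / (Rbar y).toReal ≤ S θ y := by
          rw [div_le_iff₀ hRpos]
          have := (div_le_iff₀ hSpos).1 hdiv'
          linarith [this]
        exact ENNReal.ofReal_le_ofReal this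
  have hlin : ∫⁻ y, ENNReal.ofReal (g θ y) ∂(P θ) ≤ 1 :=
    le_trans (lintegral_mono fun y => key y) (hS_e θ)
  by_cases hInt : Integrable (g θ) (P θ)
  · rw [integral_eq_lintegral_pos_part_sub_lintegral_neg_part hInt]
    have h1 : ((∫⁻ y, ENNReal.ofReal (g θ y) ∂(P θ))).toReal ≤ 1 := by
      have := ENNReal.toReal_mono ENNReal.one_ne_top hlin
      simpa using this
    have h2 : (0:ℝ) ≤ (∫⁻ y, ENNReal.ofReal (-(g θ y)) ∂(P θ)).toReal :=
      ENNReal.toReal_nonneg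
    linarith
  · rw [integral_undef hInt]; norm_num
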